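/- For all integers N_H ≥ 1 and f ≥ 1, Σ_{e=0}^{min(N_H, f)} C(f, e) · C(N_H, e) · e! · z(N_H − e, f − e) = N_H^f; that is, the counts of column-regular N_H × f binary matrices classified by their exact number e of weight-one rows sum to the total number N_H^f of column-regular matrices. -/

import Mathlib

/-- The weight of row `i` of a binary matrix `F`: the number of nonzero entries in row `i`. -/
def rowWeight {m n : ℕ} (F : Matrix (Fin m) (Fin n) Bool) (i : Fin m) : ℕ :=
  (Finset.univ.filter (fun j => F i j = true)).card

/-- The weight of column `j` of a binary matrix `F`: the number of nonzero entries in column `j`. -/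
def colWeight {m n : ℕ} (F : Matrix (Fin m) (Fin n) Bool) (j : Fin n) : ℕ :=
  (Finset.univ.filter (fun i => F i j = true)).card

/-- A binary matrix is column-regular if every column contains exactly one nonzero entry. -/
def ColRegular {m n : ℕ} (F : Matrix (Fin m) (Fin n) Bool) : Prop :=
  ∀ j, colWeight F j = 1

/-- A stopping matrix: a column-regular binary matrix with no row of weight one. -/
def IsStopping {m n : ℕ} (F : Matrix (Fin m) (Fin n) Bool) : Prop :=
  ColRegular F ∧ ∀ i, rowWeight F i ≠ 1

instance {m n : ℕ} (F : Matrix (Fin m) (Fin n) Bool) : Decidable (ColRegular F) :=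
  inferInstanceAs (Decidable (∀ j, colWeight F j = 1))

instance {m n : ℕ} (F : Matrix (Fin m) (Fin n) Bool) : Decidable (IsStopping F) :=
  inferInstanceAs (Decidable (ColRegular F ∧ ∀ i, rowWeight F i ≠ 1))

/-- `z m n` is the number of `m × n` stopping matrices. -/
def z (m n : ℕ) : ℕ :=
  Fintype.card {F : Matrix (Fin m) (Fin n) Bool // IsStopping F}

/-- `Psi h e b` is the number of `h`-tuples `(C 1, …, C h)` of subsets of a fixed
`e`-element set with `|C i| = b i` for every `i` and whose union is the whole set. -/
def Psi (h e : ℕ) (b : Fin h → ℕ) : ℕ :=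
  Fintype.card {C : Fin h → Finset (Fin e) //
    (∀ i, (C i).card = b i) ∧ Finset.univ.biUnion C = Finset.univ}

/-- In a column-regular matrix, column `j` is pivotal if the (unique) row containing the
nonzero entry of column `j` has weight one. -/
def Pivotal {m n : ℕ} (F : Matrix (Fin m) (Fin n) Bool) (j : Fin n) : Prop :=
  ∃ i, F i j = true ∧ rowWeight F i = 1

instance {m n : ℕ} (F : Matrix (Fin m) (Fin n) Bool) (j : Fin n) : Decidable (Pivotal F j) :=
  inferInstanceAs (Decidable (∃ i, F i j = true ∧ rowWeight F i = 1))

/-- Given an `h`-tuple of matrices, column `j` is initially extractable if it is pivotal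
in at least one matrix of the tuple. -/
def Extractable {m n h : ℕ} (G : Fin h → Matrix (Fin m) (Fin n) Bool) (j : Fin n) : Prop :=
  ∃ i, Pivotal (G i) j

instance {m n h : ℕ} (G : Fin h → Matrix (Fin m) (Fin n) Bool) (j : Fin n) :
    Decidable (Extractable G j) :=
  inferInstanceAs (Decidable (∃ i, Pivotal (G i) j))

/-- The count `Θ(N_H, f, h, e)` from Lemma 2. -/
def Theta (NH f h e : ℕ) : ℕ :=
  f.choose e * ∑ b ∈ Fintype.piFinset (fun _ : Fin h => Finset.range (e + 1)),
    Psi h e b * ∏ i, (NH.choose (b i) * (b i).factorial * z (NH - b i) (f - b i))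

set_option linter.unusedSectionVars false
set_option linter.unusedVariables false

-- infrastructure
section Fib
variable {α β α' β' : Type*} [Fintype α] [Fintype β] [Fintype α'] [Fintype β']
  [DecidableEq α] [DecidableEq β] [DecidableEq α'] [DecidableEq β']

/-- fiber count of a function -/
def fibc (g : α → β) (i : β) : ℕ := (Finset.univ.filter fun j => g j = i).card

lemma fibc_eq_card (g : α → β) (i : β) : fibc g i = Fintype.card {j // g j = i} :=
  (Fintype.card_subtype _).symm

/-- count of "stopping functions" -/
def zc (α β : Type*) [Fintype α] [Fintype β] [DecidableEq α] [DecidableEq β] : ℕ :=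
  Fintype.card {g : α → β // ∀ i, fibc g i ≠ 1}

lemma fibc_comp (ea : α ≃ α') (eb : β ≃ β') (g : α → β) (i' : β') :
    fibc (eb ∘ g ∘ ea.symm) i' = fibc g (eb.symm i') := by
  rw [fibc_eq_card, fibc_eq_card]
  refine Fintype.card_congr (Equiv.subtypeEquiv ea.symm (fun a' => ?_))
  show (eb ∘ g ∘ ea.symm) a' = i' ↔ g (ea.symm a') = eb.symm i'
  rw [Function.comp_apply, Function.comp_apply, Equiv.eq_symm_apply]

lemma zc_congr (ea : α ≃ α') (eb : β ≃ β') : zc α β = zc α' β' := by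
  rw [zc, zc]
  refine Fintype.card_congr (Equiv.subtypeEquiv (Equiv.arrowCongr ea eb) (fun g => ?_))
  have hc : ⇑(Equiv.arrowCongr ea eb) g = eb ∘ g ∘ ea.symm := rfl
  constructor
  · intro h i'
    rw [hc, fibc_comp]; exact h _
  · intro h i
    have h' := h (eb i)
    rwa [hc, fibc_comp, Equiv.symm_apply_apply] at h'
end Fib

-- matrix ↔ function correspondence
section Mat
variable {m n : ℕ}

def toMat (g : Fin n → Fin m) : Matrix (Fin m) (Fin n) Bool := fun i j => decide (g j = i)

lemma colFilter_toMat (g : Fin n → Fin m) (j : Fin n) :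
    (Finset.univ.filter fun i => toMat g i j = true) = {g j} := by
  ext i; simp [toMat, eq_comm]

lemma colRegular_toMat (g : Fin n → Fin m) : ColRegular (toMat g) := by
  intro j; rw [colWeight, colFilter_toMat]; simp

lemma rowWeight_toMat (g : Fin n → Fin m) (i : Fin m) :
    rowWeight (toMat g) i = fibc g i := by
  unfold rowWeight fibc
  congr 1
  ext j; simp [toMat]

def ofMat (F : Matrix (Fin m) (Fin n) Bool) (hF : ColRegular F) (j : Fin n) : Fin m :=
  (Finset.univ.filter fun i => F i j = true).min' (by
    apply Finset.card_pos.mp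
    have := hF j; unfold colWeight at this; omega)

lemma colFilter_ofMat (F : Matrix (Fin m) (Fin n) Bool) (hF : ColRegular F) (j : Fin n) :
    (Finset.univ.filter fun i => F i j = true) = {ofMat F hF j} := by
  obtain ⟨a, ha⟩ := Finset.card_eq_one.mp (hF j)
  have hm : ofMat F hF j = a := by
    rw [ofMat]; simp only [ha]; exact Finset.min'_singleton a
  rw [hm, ha]

lemma mat_eq_iff (F : Matrix (Fin m) (Fin n) Bool) (hF : ColRegular F) (i : Fin m) (j : Fin n) :
    F i j = true ↔ i = ofMat F hF j := by
  have h := colFilter_ofMat F hF j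
  constructor
  · intro hij
    have hmem : i ∈ (Finset.univ.filter fun i => F i j = true) := by simp [hij]
    rw [h, Finset.mem_singleton] at hmem; exact hmem
  · intro hi
    have hmem : i ∈ ({ofMat F hF j} : Finset (Fin m)) := by simp [hi]
    rw [← h, Finset.mem_filter] at hmem; exact hmem.2

lemma rowWeight_eq_fibc_ofMat (F : Matrix (Fin m) (Fin n) Bool) (hF : ColRegular F) (i : Fin m) :
    rowWeight F i = fibc (ofMat F hF) i := by
  unfold rowWeight fibc
  congr 1; ext j
  simp only [Finset.mem_filter, Finset.mem_univ, true_and]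
  rw [mat_eq_iff F hF i j, eq_comm]

def stopEquiv (m n : ℕ) :
    {g : Fin n → Fin m // ∀ i, fibc g i ≠ 1} ≃ {F : Matrix (Fin m) (Fin n) Bool // IsStopping F} where
  toFun g := ⟨toMat g.1, colRegular_toMat g.1, fun i => by rw [rowWeight_toMat]; exact g.2 i⟩
  invFun F := ⟨ofMat F.1 F.2.1, fun i h =>
    F.2.2 i ((rowWeight_eq_fibc_ofMat F.1 F.2.1 i).trans h)⟩
  left_inv g := by
    apply Subtype.ext
    funext j
    have h1 := colFilter_ofMat (toMat g.1) (colRegular_toMat g.1) j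
    rw [colFilter_toMat] at h1
    exact (Finset.singleton_injective h1).symm
  right_inv F := by
    apply Subtype.ext
    funext i j
    show decide (ofMat F.1 F.2.1 j = i) = F.1 i j
    by_cases h : F.1 i j = true
    · rw [h]
      have := (mat_eq_iff F.1 F.2.1 i j).mp h
      simp [← this]
    · simp only [Bool.not_eq_true] at h
      rw [h]
      have hne : ¬ (ofMat F.1 F.2.1 j = i) := fun he => by
        have := (mat_eq_iff F.1 F.2.1 i j).mpr he.symm
        rw [h] at this; exact Bool.false_ne_true this
      simp [hne]

lemma z_eq (m n : ℕ) : z m n = zc (Fin n) (Fin m) := by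
  rw [z, zc]
  convert (Fintype.card_congr (stopEquiv m n)).symm using 2
end Mat

section Count
variable {NH f : ℕ}

def buildg (S : Finset (Fin NH)) (T : Finset (Fin f)) (σ : {x // x ∈ T} ≃ {x // x ∈ S})
    (h : {x // x ∈ Tᶜ} → {x // x ∈ Sᶜ}) (j : Fin f) : Fin NH :=
  if hj : j ∈ T then ↑(σ ⟨j, hj⟩) else ↑(h ⟨j, Finset.mem_compl.mpr hj⟩)

lemma buildg_pos {S : Finset (Fin NH)} {T : Finset (Fin f)} {σ} {h} {j : Fin f} (hj : j ∈ T) :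
    buildg S T σ h j = ↑(σ ⟨j, hj⟩) := dif_pos hj

lemma buildg_neg {S : Finset (Fin NH)} {T : Finset (Fin f)} {σ} {h} {j : Fin f} (hj : j ∉ T) :
    buildg S T σ h j = ↑(h ⟨j, Finset.mem_compl.mpr hj⟩) := dif_neg hj

lemma buildg_mem_iff (S : Finset (Fin NH)) (T : Finset (Fin f)) (σ) (h) (j : Fin f) :
    buildg S T σ h j ∈ S ↔ j ∈ T := by
  by_cases hj : j ∈ T
  · rw [buildg_pos hj]
    exact iff_of_true (σ ⟨j, hj⟩).2 hj
  · rw [buildg_neg hj]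
    exact iff_of_false (Finset.mem_compl.mp (h ⟨j, Finset.mem_compl.mpr hj⟩).2) hj

/-- transport of fiber counts to the restriction -/
lemma fibc_restrict (S : Finset (Fin NH)) (T : Finset (Fin f)) (g : Fin f → Fin NH)
    (h : {x // x ∈ Tᶜ} → {x // x ∈ Sᶜ}) (hgh : ∀ y : {x // x ∈ Tᶜ}, g ↑y = ↑(h y))
    (hTi : ∀ j, g j ∈ S ↔ j ∈ T) (i : Fin NH) (hi : i ∉ S) :
    fibc g i = fibc h ⟨i, Finset.mem_compl.mpr hi⟩ := by
  rw [fibc_eq_card, fibc_eq_card]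
  apply Fintype.card_congr
  have hxT : ∀ x : {j // g j = i}, (x : Fin f) ∈ Tᶜ := by
    intro x
    rw [Finset.mem_compl]
    intro hT
    apply hi
    rw [← x.2]
    exact (hTi ↑x).mpr hT
  exact
    { toFun := fun x => ⟨⟨↑x, hxT x⟩, Subtype.ext (by rw [← hgh ⟨↑x, hxT x⟩]; exact x.2)⟩
      invFun := fun y => ⟨↑(↑y : {x // x ∈ Tᶜ}), by rw [hgh]; exact congrArg Subtype.val y.2⟩
      left_inv := fun x => Subtype.ext rfl
      right_inv := fun y => Subtype.ext (Subtype.ext rfl) }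
  
lemma fibc_buildg_one (S : Finset (Fin NH)) (T : Finset (Fin f)) (σ) (h) (i : Fin NH)
    (hi : i ∈ S) : fibc (buildg S T σ h) i = 1 := by
  rw [fibc_eq_card, Fintype.card_eq_one_iff]
  refine ⟨⟨↑(σ.symm ⟨i, hi⟩), ?_⟩, ?_⟩
  · rw [buildg_pos (σ.symm ⟨i, hi⟩).2]
    rw [Subtype.coe_eta, Equiv.apply_symm_apply]
  · rintro ⟨y, hy⟩
    apply Subtype.ext
    show y = ↑(σ.symm ⟨i, hi⟩)
    by_cases hyT : y ∈ T
    · rw [buildg_pos hyT] at hy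
      have h2 : σ ⟨y, hyT⟩ = ⟨i, hi⟩ := Subtype.ext hy
      have h3 := congrArg σ.symm h2
      rw [Equiv.symm_apply_apply] at h3
      exact congrArg Subtype.val h3
    · rw [buildg_neg hyT] at hy
      exact absurd hi (hy ▸ Finset.mem_compl.mp (h ⟨y, Finset.mem_compl.mpr hyT⟩).2)

lemma card_fiber (e : ℕ) (S : Finset (Fin NH)) (T : Finset (Fin f))
    (hS : S.card = e) (hT : T.card = e) :
    Fintype.card {g : Fin f → Fin NH //
      (Finset.univ.filter fun i => fibc g i = 1) = S ∧
      (Finset.univ.filter fun j => g j ∈ S) = T}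
      = e.factorial * z (NH - e) (f - e) := by
  have key : ∀ g : Fin f → Fin NH,
      ((Finset.univ.filter fun i => fibc g i = 1) = S ∧
        (Finset.univ.filter fun j => g j ∈ S) = T)
      ↔ ((∀ i, fibc g i = 1 ↔ i ∈ S) ∧ (∀ j, g j ∈ S ↔ j ∈ T)) := by
    intro g
    constructor
    · rintro ⟨h1, h2⟩
      refine ⟨fun i => ?_, fun j => ?_⟩
      · rw [← h1]; simp
      · rw [← h2]; simp
    · rintro ⟨h1, h2⟩
      constructor
      · ext i; simp [h1 i]
      · ext j; simp [h2 j]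
  have step1 := Fintype.card_congr (Equiv.subtypeEquivRight key)
  rw [step1]
  -- bijection with pairs
  have Φbij : ∃ Φ : (({x // x ∈ T} ≃ {x // x ∈ S}) ×
      {h : {x // x ∈ Tᶜ} → {x // x ∈ Sᶜ} // ∀ i, fibc h i ≠ 1}) → {g : Fin f → Fin NH //
      (∀ i, fibc g i = 1 ↔ i ∈ S) ∧ (∀ j, g j ∈ S ↔ j ∈ T)}, Function.Bijective Φ := by
    refine ⟨fun p => ⟨buildg S T p.1 p.2.1, fun i => ?_, buildg_mem_iff S T p.1 p.2.1⟩, ?_, ?_⟩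
    · constructor
      · intro h1
        by_contra hi
        have hres := fibc_restrict S T (buildg S T p.1 p.2.1) p.2.1
          (fun y => buildg_neg (Finset.mem_compl.mp y.2)) (buildg_mem_iff S T p.1 p.2.1) i hi
        exact p.2.2 _ (by rw [← hres]; exact h1)
      · exact fibc_buildg_one S T p.1 p.2.1 i
    · rintro ⟨σ, h, hh⟩ ⟨σ', h', hh'⟩ heq
      have hg := congrArg Subtype.val heq
      simp only at hg
      have hσ : σ = σ' := by
        apply Equiv.ext
        rintro ⟨x, hx⟩
        apply Subtype.ext
        have hx2 := congrFun hg x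
        rwa [buildg_pos hx, buildg_pos hx] at hx2
      have hhh : h = h' := by
        funext y
        apply Subtype.ext
        have hy2 := congrFun hg ↑y
        rwa [buildg_neg (Finset.mem_compl.mp y.2), buildg_neg (Finset.mem_compl.mp y.2)] at hy2
      cases hσ
      rw [Prod.ext_iff]
      exact ⟨rfl, Subtype.ext hhh⟩
    · rintro ⟨g, hW, hTg⟩
      have hr : ∀ x : {x // x ∈ T}, g ↑x ∈ S := fun x => (hTg ↑x).mpr x.2
      set r : {x // x ∈ T} → {x // x ∈ S} := fun x => ⟨g ↑x, hr x⟩ with hrdef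
      have rinj : Function.Injective r := by
        intro x x' hxx
        have hval : g ↑x = g ↑x' := congrArg Subtype.val hxx
        have hone : fibc g (g ↑x) = 1 := (hW _).mpr (hr x)
        rw [fibc_eq_card] at hone
        have hsub := Fintype.card_le_one_iff.mp (le_of_eq hone)
        have h3 := hsub ⟨↑x, rfl⟩ ⟨↑x', hval.symm⟩
        have h4 := Subtype.ext_iff.mp h3
        exact Subtype.ext h4
      have rbij : Function.Bijective r :=
        (Fintype.bijective_iff_injective_and_card r).mpr
          ⟨rinj, by simp [Fintype.card_coe, hS, hT]⟩
      set σ : {x // x ∈ T} ≃ {x // x ∈ S} := Equiv.ofBijective r rbij with hσdef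
      have hout : ∀ y : {x // x ∈ Tᶜ}, g ↑y ∉ S := by
        intro y hmem
        exact Finset.mem_compl.mp y.2 ((hTg ↑y).mp hmem)
      set h : {x // x ∈ Tᶜ} → {x // x ∈ Sᶜ} :=
        fun y => ⟨g ↑y, Finset.mem_compl.mpr (hout y)⟩ with hhdef
      have hstop : ∀ i, fibc h i ≠ 1 := by
        rintro ⟨i, hic⟩ hcon
        have hi : i ∉ S := Finset.mem_compl.mp hic
        have hres := fibc_restrict S T g h (fun y => rfl) hTg i hi
        exact hi ((hW i).mp (by rw [hres]; exact hcon))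
      refine ⟨⟨σ, h, hstop⟩, ?_⟩
      apply Subtype.ext
      funext j
      show buildg S T σ h j = g j
      by_cases hj : j ∈ T
      · rw [buildg_pos hj]; rfl
      · rw [buildg_neg hj]
  obtain ⟨Φ, hΦ⟩ := Φbij
  rw [← Fintype.card_of_bijective hΦ]
  have c1 : Fintype.card ({x // x ∈ T} ≃ {x // x ∈ S}) = e.factorial := by
    have hc : Fintype.card {x // x ∈ T} = Fintype.card {x // x ∈ S} := by
      simp [Fintype.card_coe, hS, hT]
    rw [Fintype.card_equiv (Fintype.equivOfCardEq hc), Fintype.card_coe, hT]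
  have c2 : Fintype.card {h : {x // x ∈ Tᶜ} → {x // x ∈ Sᶜ} // ∀ i, fibc h i ≠ 1}
      = z (NH - e) (f - e) := by
    have eT : {x // x ∈ Tᶜ} ≃ Fin (f - e) :=
      (Tᶜ).equivFin.trans (finCongr (by rw [Finset.card_compl, hT, Fintype.card_fin]))
    have eS : {x // x ∈ Sᶜ} ≃ Fin (NH - e) :=
      (Sᶜ).equivFin.trans (finCongr (by rw [Finset.card_compl, hS, Fintype.card_fin]))
    have hz := (zc_congr eT eS).trans (z_eq (NH - e) (f - e)).symm
    rw [zc] at hz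
    convert hz using 2
  rw [Fintype.card_prod, c1, c2]



lemma level2 (e : ℕ) (S : Finset (Fin NH)) (hS : S.card = e) :
    (Finset.univ.filter fun g : Fin f → Fin NH =>
      (Finset.univ.filter fun i => fibc g i = 1) = S).card
    = f.choose e * (e.factorial * z (NH - e) (f - e)) := by
  have hTmem : ∀ g ∈ (Finset.univ.filter fun g : Fin f → Fin NH =>
      (Finset.univ.filter fun i => fibc g i = 1) = S),
      (Finset.univ.filter fun j => g j ∈ S) ∈ Finset.powersetCard e (Finset.univ : Finset (Fin f)) := by
    intro g hg
    rw [Finset.mem_filter] at hg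
    rw [Finset.mem_powersetCard_univ]
    have h1 : ∀ i ∈ S, fibc g i = 1 := by
      intro i hi
      rw [← hg.2] at hi
      exact (Finset.mem_filter.mp hi).2
    rw [Finset.card_eq_sum_card_fiberwise (s := Finset.univ.filter fun j => g j ∈ S) (f := g) (t := S)
      (fun j hj => (Finset.mem_filter.mp hj).2)]
    have h2 : ∀ i ∈ S,
        ((Finset.univ.filter fun j => g j ∈ S).filter fun j => g j = i).card = 1 := by
      intro i hi
      have h3 : ((Finset.univ.filter fun j => g j ∈ S).filter fun j => g j = i)
          = Finset.univ.filter fun j => g j = i := by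
        ext j
        simp only [Finset.mem_filter, Finset.mem_univ, true_and]
        constructor
        · tauto
        · intro hj; exact ⟨hj ▸ hi, hj⟩
      rw [h3]
      exact h1 i hi
    rw [Finset.sum_congr rfl h2, Finset.sum_const, smul_eq_mul, mul_one, hS]
  rw [Finset.card_eq_sum_card_fiberwise hTmem]
  have each : ∀ T ∈ Finset.powersetCard e (Finset.univ : Finset (Fin f)),
      ((Finset.univ.filter fun g : Fin f → Fin NH =>
        (Finset.univ.filter fun i => fibc g i = 1) = S).filter
        fun g => (Finset.univ.filter fun j => g j ∈ S) = T).card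
      = e.factorial * z (NH - e) (f - e) := by
    intro T hT
    rw [Finset.filter_filter, ← Fintype.card_subtype]
    exact card_fiber e S T hS (Finset.mem_powersetCard_univ.mp hT)
  rw [Finset.sum_congr rfl each, Finset.sum_const, smul_eq_mul,
    Finset.card_powersetCard, Finset.card_univ, Fintype.card_fin]

end Count


/-- For `N_H ≥ 1` and `f ≥ 1`,
`Σ_{e=0}^{min(N_H,f)} C(f,e) · C(N_H,e) · e! · z(N_H−e, f−e) = N_H^f`:
the counts of column-regular `N_H × f` binary matrices classified by their exact number
`e` of weight-one rows sum to the total number `N_H^f` of column-regular matrices. -/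
theorem sum_counts_by_weight_one_rows (NH f : ℕ) (hNH : 1 ≤ NH) (hf : 1 ≤ f) :
    ∑ e ∈ Finset.range (min NH f + 1),
        f.choose e * NH.choose e * e.factorial * z (NH - e) (f - e) = NH ^ f := by
  have hcard : (Finset.univ : Finset (Fin f → Fin NH)).card = NH ^ f := by
    rw [Finset.card_univ, Fintype.card_fun, Fintype.card_fin, Fintype.card_fin]
  have hmem : ∀ g ∈ (Finset.univ : Finset (Fin f → Fin NH)),
      (Finset.univ.filter fun i => fibc g i = 1).card ∈ Finset.range (min NH f + 1) := by
    intro g _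
    rw [Finset.mem_range, Nat.lt_succ_iff, le_min_iff]
    constructor
    · calc (Finset.univ.filter fun i => fibc g i = 1).card
          ≤ (Finset.univ : Finset (Fin NH)).card := Finset.card_filter_le _ _
        _ = NH := by rw [Finset.card_univ, Fintype.card_fin]
    · have hsum : ∑ i : Fin NH, fibc g i = f := by
        have h0 := Finset.card_eq_sum_card_fiberwise
          (s := (Finset.univ : Finset (Fin f))) (f := g) (t := Finset.univ)
          (fun j _ => Finset.mem_univ _)
        rw [Finset.card_univ, Fintype.card_fin] at h0
        exact h0.symm
      calc (Finset.univ.filter fun i => fibc g i = 1).card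
          = ∑ i ∈ Finset.univ.filter (fun i => fibc g i = 1), fibc g i := by
            rw [Finset.card_eq_sum_ones]
            exact Finset.sum_congr rfl fun i hi => ((Finset.mem_filter.mp hi).2).symm
        _ ≤ ∑ i : Fin NH, fibc g i :=
            Finset.sum_le_sum_of_subset (Finset.subset_univ _)
        _ = f := hsum
  rw [← hcard, Finset.card_eq_sum_card_fiberwise hmem]
  apply Finset.sum_congr rfl
  intro e _
  have hfiber : ((Finset.univ : Finset (Fin f → Fin NH)).filter
      fun g => (Finset.univ.filter fun i => fibc g i = 1).card = e).card
      = NH.choose e * (f.choose e * (e.factorial * z (NH - e) (f - e))) := by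
    have hSmem : ∀ g ∈ (Finset.univ : Finset (Fin f → Fin NH)).filter
        (fun g => (Finset.univ.filter fun i => fibc g i = 1).card = e),
        (Finset.univ.filter fun i => fibc g i = 1)
          ∈ Finset.powersetCard e (Finset.univ : Finset (Fin NH)) := by
      intro g hg
      rw [Finset.mem_powersetCard_univ]
      exact (Finset.mem_filter.mp hg).2
    rw [Finset.card_eq_sum_card_fiberwise hSmem]
    have each : ∀ S ∈ Finset.powersetCard e (Finset.univ : Finset (Fin NH)),
        (((Finset.univ : Finset (Fin f → Fin NH)).filter
          (fun g => (Finset.univ.filter fun i => fibc g i = 1).card = e)).filter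
          fun g => (Finset.univ.filter fun i => fibc g i = 1) = S).card
        = f.choose e * (e.factorial * z (NH - e) (f - e)) := by
      intro S hSm
      have hS := Finset.mem_powersetCard_univ.mp hSm
      have hsame : (((Finset.univ : Finset (Fin f → Fin NH)).filter
          (fun g => (Finset.univ.filter fun i => fibc g i = 1).card = e)).filter
          fun g => (Finset.univ.filter fun i => fibc g i = 1) = S)
          = (Finset.univ.filter fun g : Fin f → Fin NH =>
            (Finset.univ.filter fun i => fibc g i = 1) = S) := by
        rw [Finset.filter_filter]
        ext g
        simp only [Finset.mem_filter, Finset.mem_univ, true_and]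
        constructor
        · tauto
        · intro hgS; exact ⟨by rw [hgS, hS], hgS⟩
      rw [hsame]
      exact level2 e S hS
    rw [Finset.sum_congr rfl each, Finset.sum_const, smul_eq_mul,
      Finset.card_powersetCard, Finset.card_univ, Fintype.card_fin]
  rw [hfiber]
  ring
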